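/- arXiv:2603.13805 — 2 statements merged into one kernel-verified Lean document; each statement's English description precedes it below -/
import Mathlib

section
/- Let Y be a compact metric space and c: [0,1] × Y → ℝ^{N×N} a continuous function with c(x,y) = O(x^δ) uniformly in y for some δ > 0 (i.e., |c(x,y)| ≤ C x^δ). Given u₀ ∈ C⁰(Y; ℝᴺ), the initial value problem x·∂ₓu + c·u = 0, u(0,y) = u₀(y), admits a unique continuous solution u: [0,1] × Y → ℝᴺ. Moreover the solution is the uniform limit of the Picard iterates uₖ₊₁(x,y) = u₀(y) + ∫₀ˣ a(s,y) uₖ(s,y) ds, where a = −c/x, and satisfies |u(x,y) − u₀(y)| ≤ C' x^δ. -/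
open Matrix Set MeasureTheory intervalIntegral Filter

namespace SingODE

/-- Integral of `K * s^(q-1)` from `0` to `x`. -/
lemma integral_Kpow (q K x : ℝ) (hq : 0 < q) (hx : 0 ≤ x) :
    IntervalIntegrable (fun s => K * s ^ (q - 1)) volume 0 x ∧
      (∫ s in (0:ℝ)..x, K * s ^ (q - 1)) = K * x ^ q / q := by
  have h1 : IntervalIntegrable (fun s : ℝ => s ^ (q - 1)) volume 0 x :=
    intervalIntegrable_rpow' (by linarith)
  refine ⟨h1.const_mul K, ?_⟩
  rw [intervalIntegral.integral_const_mul, integral_rpow (Or.inl (by linarith))]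
  rw [sub_add_cancel, Real.zero_rpow hq.ne', sub_zero, mul_div_assoc]

/-- Basic one-step Picard estimate. -/
lemma iter_step {E : Type*} [NormedAddCommGroup E] [NormedSpace ℝ E]
    (g : ℝ → E) (K q x : ℝ) (hq : 0 < q) (hK : 0 ≤ K) (hx : 0 ≤ x)
    (hb : ∀ s ∈ Ioc (0:ℝ) x, ‖g s‖ ≤ K * s ^ (q - 1)) :
    ‖∫ s in (0:ℝ)..x, g s‖ ≤ K * x ^ q / q := by
  obtain ⟨hint, hval⟩ := integral_Kpow q K x hq hx
  have h0 : Set.uIoc (0:ℝ) x = Ioc 0 x := uIoc_of_le hx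
  have := intervalIntegral.norm_integral_le_abs_of_norm_le (μ := volume) (f := g)
      (a := 0) (b := x) ?_ hint
  · rw [hval] at this
    refine this.trans (le_of_eq (abs_of_nonneg ?_))
    positivity
  · rw [h0]
    exact (ae_restrict_iff' measurableSet_Ioc).2 (ae_of_all _ hb)

/-- Interval integrability from a dominating integrable bound on `Ioc 0 T`. -/
lemma intInt_of_bound {E : Type*} [NormedAddCommGroup E]
    (g : ℝ → E) (h : ℝ → ℝ) (T x : ℝ) (hx : x ∈ Icc 0 T)
    (hg : ContinuousOn g (Ioc 0 T)) (hgb : ∀ s ∈ Ioc (0:ℝ) T, ‖g s‖ ≤ h s)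
    (hh : IntegrableOn h (Ioc 0 T)) : IntervalIntegrable g volume 0 x := by
  rw [intervalIntegrable_iff, uIoc_of_le hx.1]
  have hgT : IntegrableOn g (Ioc 0 T) := by
    refine Integrable.mono' hh (hg.aestronglyMeasurable measurableSet_Ioc) ?_
    exact (ae_restrict_iff' measurableSet_Ioc).2 (ae_of_all _ hgb)
  exact hgT.mono_set (Ioc_subset_Ioc_right hx.2)

/-- `mulVec` bound in the sup norm. -/
lemma mulVec_norm_le {N : ℕ} (A : Matrix (Fin N) (Fin N) ℝ) (v : Fin N → ℝ) (K : ℝ)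
    (hK : 0 ≤ K) (h : ∀ i j, |A i j| ≤ K) : ‖A.mulVec v‖ ≤ N * K * ‖v‖ := by
  have hnn : (0:ℝ) ≤ N * K * ‖v‖ := by positivity
  rw [pi_norm_le_iff_of_nonneg hnn]
  intro i
  have : ‖A.mulVec v i‖ = |∑ j, A i j * v j| := by
    simp [Matrix.mulVec, dotProduct, Real.norm_eq_abs]
  rw [this]
  calc |∑ j, A i j * v j| ≤ ∑ j, |A i j * v j| := Finset.abs_sum_le_sum_abs _ _
    _ ≤ ∑ _j : Fin N, K * ‖v‖ := by
        refine Finset.sum_le_sum fun j _ => ?_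
        rw [abs_mul]
        exact mul_le_mul (h i j) ((Real.norm_eq_abs _ ▸ norm_le_pi_norm v j))
          (abs_nonneg _) hK
    _ = N * K * ‖v‖ := by simp [mul_assoc]




open Matrix Set MeasureTheory intervalIntegral Filter Topology



/-- Joint continuity of a parameter-dependent primitive with an integrable
singular bound. -/
lemma contOn_param_integral {Y : Type*} [TopologicalSpace Y] [FirstCountableTopology Y]
    {E : Type*} [NormedAddCommGroup E] [NormedSpace ℝ E]
    (g : ℝ → Y → E) (h : ℝ → ℝ) (T : ℝ) (hT : 0 < T)
    (hg : ContinuousOn (fun p : ℝ × Y => g p.1 p.2) (Ioc 0 T ×ˢ univ))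
    (hgb : ∀ s ∈ Ioc (0:ℝ) T, ∀ y, ‖g s y‖ ≤ h s)
    (hh : IntegrableOn h (Ioc 0 T)) :
    ContinuousOn (fun p : ℝ × Y => ∫ s in (0:ℝ)..p.1, g s p.2) (Icc 0 T ×ˢ univ) := by
  -- continuity of g in y for fixed s, and in s for fixed y
  have hgy : ∀ s ∈ Ioc (0:ℝ) T, Continuous fun y => g s y := by
    intro s hs
    rw [← continuousOn_univ]
    exact hg.comp (f := fun y : Y => ((s, y) : ℝ × Y))
      (continuous_const.prodMk continuous_id).continuousOn (fun y _ => ⟨hs, mem_univ _⟩)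
  have hgs : ∀ y, ContinuousOn (fun s => g s y) (Ioc 0 T) :=
    fun y => hg.comp (f := fun s : ℝ => ((s, y) : ℝ × Y))
      (continuous_id.prodMk continuous_const).continuousOn (fun s hs => ⟨hs, mem_univ _⟩)
  -- integrability of g (·, y)
  have hint : ∀ y, ∀ x ∈ Icc (0:ℝ) T, IntervalIntegrable (fun s => g s y) volume 0 x := by
    intro y x hx
    exact intInt_of_bound _ h T x hx (hgs y) (fun s hs => hgb s hs y) hh
  have hhi : ∀ x ∈ Icc (0:ℝ) T, IntervalIntegrable h volume 0 x := by
    intro x hx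
    rw [intervalIntegrable_iff, uIoc_of_le hx.1]
    exact hh.mono_set (Ioc_subset_Ioc_right hx.2)
  -- the primitive of h
  set H : ℝ → ℝ := fun x => ∫ s in (0:ℝ)..x, h s with hH
  have hHc : ContinuousOn H (Icc 0 T) := by
    have : IntegrableOn h (uIcc 0 T) := by
      rw [uIcc_of_le hT.le, integrableOn_Icc_iff_integrableOn_Ioc]; exact hh
    simpa [hH, uIcc_of_le hT.le] using continuousOn_primitive_interval (a := 0) (b := T) this
  rintro ⟨x₀, y₀⟩ ⟨hx₀, -⟩
  -- continuity in y at y₀ of the integral over [0, x₀]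
  have hG : ContinuousAt (fun y => ∫ s in (0:ℝ)..x₀, g s y) y₀ := by
    have hrw : ∀ y, (∫ s in (0:ℝ)..x₀, g s y) = ∫ s in Ioc (0:ℝ) x₀, g s y := by
      intro y; rw [intervalIntegral.integral_of_le hx₀.1]
    simp only [hrw]
    refine continuousAt_of_dominated (bound := h) ?_ ?_ (hh.mono_set (Ioc_subset_Ioc_right hx₀.2)) ?_
    · refine Eventually.of_forall fun y => ?_
      exact ((hgs y).mono (Ioc_subset_Ioc_right hx₀.2)).aestronglyMeasurable measurableSet_Ioc
    · refine Eventually.of_forall fun y => ?_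
      exact (ae_restrict_iff' measurableSet_Ioc).2
        (ae_of_all _ fun s hs => hgb s (Ioc_subset_Ioc_right hx₀.2 hs) y)
    · exact (ae_restrict_iff' measurableSet_Ioc).2
        (ae_of_all _ fun s hs => (hgy s (Ioc_subset_Ioc_right hx₀.2 hs)).continuousAt)
  -- the key estimate
  have key : ∀ p : ℝ × Y, p ∈ Icc (0:ℝ) T ×ˢ (univ : Set Y) →
      ‖(∫ s in (0:ℝ)..p.1, g s p.2) - ∫ s in (0:ℝ)..x₀, g s y₀‖ ≤
        |H p.1 - H x₀| + ‖(∫ s in (0:ℝ)..x₀, g s p.2) - ∫ s in (0:ℝ)..x₀, g s y₀‖ := by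
    rintro ⟨x, y⟩ ⟨hx, -⟩
    have e1 : (∫ s in (0:ℝ)..x, g s y) - ∫ s in (0:ℝ)..x₀, g s y
        = ∫ s in x₀..x, g s y :=
      integral_interval_sub_left (hint y x hx) (hint y x₀ hx₀)
    have e2 : H x - H x₀ = ∫ s in x₀..x, h s :=
      integral_interval_sub_left (hhi x hx) (hhi x₀ hx₀)
    have hsub : Set.uIoc x₀ x ⊆ Ioc 0 T := by
      intro s hs
      rw [Set.uIoc_eq_union] at hs
      rcases hs with hs | hs
      · exact ⟨lt_of_le_of_lt hx₀.1 hs.1, hs.2.trans hx.2⟩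
      · exact ⟨lt_of_le_of_lt hx.1 hs.1, hs.2.trans hx₀.2⟩
    have e3 : ‖∫ s in x₀..x, g s y‖ ≤ |∫ s in x₀..x, h s| := by
      refine intervalIntegral.norm_integral_le_abs_of_norm_le ?_ ?_
      · exact (ae_restrict_iff' measurableSet_uIoc).2
          (ae_of_all _ fun s hs => hgb s (hsub hs) y)
      · refine (hhi T ⟨hT.le, le_rfl⟩).mono_set ?_
        refine uIcc_subset_uIcc ?_ ?_ <;> rw [uIcc_of_le hT.le]
        · exact hx₀
        · exact hx
    calc ‖(∫ s in (0:ℝ)..x, g s y) - ∫ s in (0:ℝ)..x₀, g s y₀‖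
        ≤ ‖(∫ s in (0:ℝ)..x, g s y) - ∫ s in (0:ℝ)..x₀, g s y‖ +
          ‖(∫ s in (0:ℝ)..x₀, g s y) - ∫ s in (0:ℝ)..x₀, g s y₀‖ := by
          have := norm_sub_le_norm_sub_add_norm_sub
            (∫ s in (0:ℝ)..x, g s y) (∫ s in (0:ℝ)..x₀, g s y) (∫ s in (0:ℝ)..x₀, g s y₀)
          exact this
      _ ≤ |H x - H x₀| + ‖(∫ s in (0:ℝ)..x₀, g s y) - ∫ s in (0:ℝ)..x₀, g s y₀‖ := by
          rw [e1]
          exact add_le_add_left (e3.trans (le_of_eq (by rw [e2]))) _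
  -- conclude by squeezing
  have hb : Tendsto (fun p : ℝ × Y => |H p.1 - H x₀| +
      ‖(∫ s in (0:ℝ)..x₀, g s p.2) - ∫ s in (0:ℝ)..x₀, g s y₀‖)
      (𝓝[Icc (0:ℝ) T ×ˢ (univ : Set Y)] (x₀, y₀)) (𝓝 0) := by
    have h1 : Tendsto (fun p : ℝ × Y => H p.1)
        (𝓝[Icc (0:ℝ) T ×ˢ (univ : Set Y)] (x₀, y₀)) (𝓝 (H x₀)) := by
      refine (hHc x₀ hx₀).tendsto.comp ?_
      exact (continuous_fst.continuousWithinAt).tendsto_nhdsWithin (fun p hp => hp.1)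
    have h2 : Tendsto (fun p : ℝ × Y => ∫ s in (0:ℝ)..x₀, g s p.2)
        (𝓝[Icc (0:ℝ) T ×ˢ (univ : Set Y)] (x₀, y₀)) (𝓝 (∫ s in (0:ℝ)..x₀, g s y₀)) := by
      have hsnd : Tendsto (Prod.snd : ℝ × Y → Y)
          (𝓝[Icc (0:ℝ) T ×ˢ (univ : Set Y)] (x₀, y₀)) (𝓝 y₀) :=
        (continuous_snd.tendsto _).mono_left nhdsWithin_le_nhds
      exact Filter.Tendsto.comp hG hsnd
    have hb' : Tendsto (fun p : ℝ × Y => |H p.1 - H x₀| +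
        ‖(∫ s in (0:ℝ)..x₀, g s p.2) - ∫ s in (0:ℝ)..x₀, g s y₀‖)
        (𝓝[Icc (0:ℝ) T ×ˢ (univ : Set Y)] (x₀, y₀))
        (𝓝 (|H x₀ - H x₀| + ‖(∫ s in (0:ℝ)..x₀, g s y₀) - ∫ s in (0:ℝ)..x₀, g s y₀‖)) :=
      ((h1.sub tendsto_const_nhds).abs.add ((h2.sub tendsto_const_nhds).norm))
    simpa using hb'
  rw [ContinuousWithinAt, tendsto_iff_norm_sub_tendsto_zero]
  refine squeeze_zero_norm' ?_ hb
  filter_upwards [self_mem_nhdsWithin] with p hp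
  simpa using key p hp



/-- The kernel `a(s,y)·v = −s⁻¹ c(s,y)·v` of the Picard iteration. -/
noncomputable def Ak {N : ℕ} {Y : Type*} (c : ℝ → Y → Matrix (Fin N) (Fin N) ℝ)
    (s : ℝ) (y : Y) (v : Fin N → ℝ) : Fin N → ℝ :=
  (-(s⁻¹)) • (c s y).mulVec v

lemma Ak_sub {N : ℕ} {Y : Type*} (c : ℝ → Y → Matrix (Fin N) (Fin N) ℝ)
    (s : ℝ) (y : Y) (v w : Fin N → ℝ) :
    Ak c s y (v - w) = Ak c s y v - Ak c s y w := by
  simp [Ak, Matrix.mulVec_sub, smul_sub]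

lemma Ak_contOn {N : ℕ} {Y : Type*} [TopologicalSpace Y]
    (c : ℝ → Y → Matrix (Fin N) (Fin N) ℝ)
    (hc : Continuous fun p : ℝ × Y => c p.1 p.2) (T : ℝ)
    (f : ℝ → Y → Fin N → ℝ)
    (hf : ContinuousOn (fun p : ℝ × Y => f p.1 p.2) (Icc 0 T ×ˢ univ)) :
    ContinuousOn (fun p : ℝ × Y => Ak c p.1 p.2 (f p.1 p.2)) (Ioc 0 T ×ˢ univ) := by
  have hsub : (Ioc 0 T ×ˢ (univ : Set Y)) ⊆ Icc 0 T ×ˢ univ :=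
    prod_mono Ioc_subset_Icc_self subset_rfl
  show ContinuousOn (fun p : ℝ × Y => (-(p.1⁻¹)) • (c p.1 p.2).mulVec (f p.1 p.2)) _
  refine ContinuousOn.smul (f := fun p : ℝ × Y => -(p.1⁻¹))
    (g := fun p : ℝ × Y => (c p.1 p.2).mulVec (f p.1 p.2)) ?_ ?_
  · exact (continuous_fst.continuousOn.inv₀ (fun p hp => ne_of_gt hp.1.1)).neg
  · rw [continuousOn_pi]
    intro i
    have : ∀ p : ℝ × Y, (c p.1 p.2).mulVec (f p.1 p.2) i
        = ∑ j, c p.1 p.2 i j * f p.1 p.2 j := fun p => rfl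
    simp only [this]
    refine continuousOn_finset_sum _ fun j _ => ContinuousOn.mul ?_ ?_
    · exact ((continuous_apply j).comp ((continuous_apply i).comp hc)).continuousOn
    · exact (continuousOn_pi.1 (hf.mono hsub) j)

/-- Picard iterates. -/
noncomputable def pic {N : ℕ} {Y : Type*} (c : ℝ → Y → Matrix (Fin N) (Fin N) ℝ)
    (u₀ : Y → Fin N → ℝ) : ℕ → ℝ → Y → Fin N → ℝ
  | 0 => fun _ y => u₀ y
  | (k+1) => fun x y => u₀ y + ∫ s in (0:ℝ)..x, Ak c s y (pic c u₀ k s y)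

lemma pic_zero {N : ℕ} {Y : Type*} (c : ℝ → Y → Matrix (Fin N) (Fin N) ℝ)
    (u₀ : Y → Fin N → ℝ) (x : ℝ) (y : Y) : pic c u₀ 0 x y = u₀ y := rfl

lemma pic_succ {N : ℕ} {Y : Type*} (c : ℝ → Y → Matrix (Fin N) (Fin N) ℝ)
    (u₀ : Y → Fin N → ℝ) (k : ℕ) (x : ℝ) (y : Y) :
    pic c u₀ (k+1) x y = u₀ y + ∫ s in (0:ℝ)..x, Ak c s y (pic c u₀ k s y) := rfl

end SingODE
open Matrix Set MeasureTheory intervalIntegral Filter Topology SingODE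

/-- `u` is a continuous solution on `[0,1] × Y` of the singular initial value
problem `x·∂ₓu + c·u = 0`, `u(0,y) = u₀(y)`. -/
def IsSingODESol {N : ℕ} {Y : Type*} [TopologicalSpace Y]
    (c : ℝ → Y → Matrix (Fin N) (Fin N) ℝ) (u₀ : Y → Fin N → ℝ)
    (u : ℝ → Y → Fin N → ℝ) : Prop :=
  ContinuousOn (fun p : ℝ × Y => u p.1 p.2) (Icc 0 1 ×ˢ univ) ∧
  (∀ y, u 0 y = u₀ y) ∧
  (∀ y, ∀ x ∈ Ioc (0 : ℝ) 1, ∃ d : Fin N → ℝ,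
    HasDerivAt (fun t => u t y) d x ∧ x • d + (c x y).mulVec (u x y) = 0)

set_option maxHeartbeats 2000000 in
/-- Existence, uniqueness, Picard approximation and a `O(x^δ)` estimate for the
singular initial value problem `x·∂ₓu + c·u = 0`, `u(0,·) = u₀`, on a compact
space `Y`, when `c` is continuous with `‖c(x,y)‖ = O(x^δ)` uniformly, `δ > 0`.
The Picard iterates are `uₖ₊₁(x,y) = u₀(y) + ∫₀ˣ a(s,y)·uₖ(s,y) ds`, with
`a = −c/x`. -/
theorem singular_ODE_exists_unique
    {N : ℕ} {Y : Type*} [MetricSpace Y] [CompactSpace Y]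
    (δ C : ℝ) (hδ : 0 < δ)
    (c : ℝ → Y → Matrix (Fin N) (Fin N) ℝ)
    (hc : Continuous fun p : ℝ × Y => c p.1 p.2)
    (hbound : ∀ x ∈ Icc (0 : ℝ) 1, ∀ y i j, |c x y i j| ≤ C * x ^ δ)
    (u₀ : Y → Fin N → ℝ) (hu₀ : Continuous u₀) :
    (∃ u : ℝ → Y → Fin N → ℝ, IsSingODESol c u₀ u ∧
      (∃ C' : ℝ, ∀ x ∈ Icc (0 : ℝ) 1, ∀ y, ‖u x y - u₀ y‖ ≤ C' * x ^ δ) ∧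
      (∀ v : ℕ → ℝ → Y → Fin N → ℝ,
        (∀ x y, v 0 x y = u₀ y) →
        (∀ k x y, v (k + 1) x y
            = u₀ y + ∫ s in (0 : ℝ)..x, (-(s⁻¹)) • (c s y).mulVec (v k s y)) →
        TendstoUniformlyOn (fun k (p : ℝ × Y) => v k p.1 p.2)
          (fun p : ℝ × Y => u p.1 p.2) Filter.atTop (Icc 0 1 ×ˢ univ))) ∧
    (∀ u₁ u₂ : ℝ → Y → Fin N → ℝ, IsSingODESol c u₀ u₁ → IsSingODESol c u₀ u₂ →
      ∀ x ∈ Icc (0 : ℝ) 1, ∀ y, u₁ x y = u₂ x y) := by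
  classical
  -- a global entrywise bound for `c` on `[0,2] × Y`
  obtain ⟨C₂, hC₂⟩ : ∃ C₂, ∀ p ∈ (Icc (0:ℝ) 2 ×ˢ (univ : Set Y)),
      ‖(fun ij : Fin N × Fin N => c p.1 p.2 ij.1 ij.2)‖ ≤ C₂ := by
    refine (isCompact_Icc.prod isCompact_univ).exists_bound_of_continuousOn ?_
    exact (continuous_pi fun ij : Fin N × Fin N =>
      (continuous_apply ij.2).comp ((continuous_apply ij.1).comp hc)).continuousOn
  set Cb : ℝ := max (max C C₂) 0 with hCbdef
  have hCb0 : 0 ≤ Cb := le_max_right _ _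
  have hcb : ∀ s ∈ Ioc (0:ℝ) 2, ∀ y (i j : Fin N), |c s y i j| ≤ Cb * s ^ δ := by
    intro s hs y i j
    by_cases h1 : s ≤ 1
    · refine (hbound s ⟨hs.1.le, h1⟩ y i j).trans ?_
      have : C ≤ Cb := (le_max_left C C₂).trans (le_max_left _ _)
      exact mul_le_mul_of_nonneg_right this (Real.rpow_nonneg hs.1.le δ)
    · push_neg at h1
      have h2 : |c s y i j| ≤ C₂ := by
        have := hC₂ (s, y) ⟨⟨hs.1.le, hs.2⟩, mem_univ _⟩
        have h3 : ‖c s y i j‖ ≤ ‖(fun ij : Fin N × Fin N => c s y ij.1 ij.2)‖ :=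
          norm_le_pi_norm (fun ij : Fin N × Fin N => c s y ij.1 ij.2) (i, j)
        simpa [Real.norm_eq_abs] using h3.trans this
      have h4 : C₂ ≤ Cb := (le_max_right C C₂).trans (le_max_left _ _)
      have h5 : (1:ℝ) ≤ s ^ δ := Real.one_le_rpow h1.le hδ.le
      calc |c s y i j| ≤ Cb := h2.trans h4
        _ = Cb * 1 := (mul_one _).symm
        _ ≤ Cb * s ^ δ := mul_le_mul_of_nonneg_left h5 hCb0
  set M : ℝ := (N : ℝ) * Cb with hMdef
  have hM0 : 0 ≤ M := by positivity
  -- the fundamental kernel estimate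
  have hA : ∀ s ∈ Ioc (0:ℝ) 2, ∀ y (v : Fin N → ℝ),
      ‖Ak c s y v‖ ≤ M * s ^ (δ - 1) * ‖v‖ := by
    intro s hs y v
    have hs0 : (0:ℝ) < s := hs.1
    have h1 : ‖Ak c s y v‖ = s⁻¹ * ‖(c s y).mulVec v‖ := by
      rw [Ak, norm_smul, norm_neg, Real.norm_eq_abs, abs_of_nonneg (inv_nonneg.2 hs0.le)]
    rw [h1]
    calc s⁻¹ * ‖(c s y).mulVec v‖
        ≤ s⁻¹ * ((N : ℝ) * (Cb * s ^ δ) * ‖v‖) := by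
          refine mul_le_mul_of_nonneg_left ?_ (inv_nonneg.2 hs0.le)
          exact mulVec_norm_le _ _ _ (by positivity) (fun i j => hcb s hs y i j)
      _ = M * (s⁻¹ * s ^ δ) * ‖v‖ := by ring
      _ = M * s ^ (δ - 1) * ‖v‖ := by
          rw [Real.rpow_sub hs0, Real.rpow_one]
          ring
  -- bound for the initial data
  obtain ⟨B₀, hB₀⟩ := isCompact_univ.exists_bound_of_continuousOn hu₀.continuousOn
  set B : ℝ := max B₀ 0 with hBdef
  have hB0 : 0 ≤ B := le_max_right _ _
  have hB : ∀ y, ‖u₀ y‖ ≤ B := fun y => (hB₀ y (mem_univ y)).trans (le_max_left _ _)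
  have hMδ : 0 ≤ M / δ := div_nonneg hM0 hδ.le
  have hMs : ∀ s : ℝ, 0 < s → 0 ≤ M * s ^ (δ - 1) :=
    fun s hs => mul_nonneg hM0 (Real.rpow_nonneg hs.le _)
  set r : ℝ := M / δ * 2 ^ δ with hrdef
  have h2δ : (0:ℝ) < 2 ^ δ := Real.rpow_pos_of_pos two_pos δ
  have hr0 : 0 ≤ r := mul_nonneg hMδ h2δ.le
  have hSsum : Summable (fun n : ℕ => r ^ n / (n.factorial : ℝ)) :=
    Real.summable_pow_div_factorial r
  set S : ℝ := ∑' n : ℕ, r ^ n / (n.factorial : ℝ) with hSdef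
  have hpart : ∀ k : ℕ, ∑ j ∈ Finset.range k, r ^ j / (j.factorial : ℝ) ≤ S :=
    fun k => Summable.sum_le_tsum _ (fun i _ => by positivity) hSsum
  set W : ℝ := B * S with hWdef
  set w : ℕ → ℝ → Y → Fin N → ℝ := pic c u₀ with hwdef
  -- conversion between rpow and npow of x^δ
  have hxp : ∀ x : ℝ, 0 ≤ x → ∀ n : ℕ, x ^ (δ * (n:ℝ)) = (x ^ δ) ^ n := by
    intro x hx n
    rw [Real.rpow_mul hx, Real.rpow_natCast]
  have hkey : ∀ (k : ℕ) (x : ℝ), x ∈ Icc (0:ℝ) 2 →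
      (M/δ) ^ (k+1) * (x ^ δ) ^ (k+1) ≤ r ^ (k+1) := by
    intro k x hx
    rw [← mul_pow]
    refine pow_le_pow_left₀ (mul_nonneg hMδ (Real.rpow_nonneg hx.1 δ)) ?_ _
    rw [hrdef]
    exact mul_le_mul_of_nonneg_left (Real.rpow_le_rpow hx.1 hx.2 hδ.le) hMδ
  -- joint continuity of the integrand
  have hcontg : ∀ (f : ℝ → Y → Fin N → ℝ) (T : ℝ),
      ContinuousOn (fun p : ℝ × Y => f p.1 p.2) (Icc 0 T ×ˢ univ) →
      ContinuousOn (fun p : ℝ × Y => Ak c p.1 p.2 (f p.1 p.2)) (Ioc 0 T ×ˢ univ) :=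
    fun f T hf => Ak_contOn c hc T f hf
  have hcomp1 : ∀ (f : ℝ → Y → Fin N → ℝ) (T : ℝ),
      ContinuousOn (fun p : ℝ × Y => Ak c p.1 p.2 (f p.1 p.2)) (Ioc 0 T ×ˢ univ) →
      ∀ y, ContinuousOn (fun s => Ak c s y (f s y)) (Ioc 0 T) := by
    intro f T hf y
    exact hf.comp (f := fun s : ℝ => ((s, y) : ℝ × Y))
      (continuous_id.prodMk continuous_const).continuousOn
      (fun s hs => ⟨hs, mem_univ _⟩)
  -- interval integrability of the integrand, from a sup bound
  have hintg : ∀ (f : ℝ → Y → Fin N → ℝ) (Wf T : ℝ), 0 < T → T ≤ 2 →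
      ContinuousOn (fun p : ℝ × Y => f p.1 p.2) (Icc 0 T ×ˢ univ) →
      (∀ x ∈ Icc (0:ℝ) T, ∀ y, ‖f x y‖ ≤ Wf) →
      ∀ y, ∀ x ∈ Icc (0:ℝ) T,
        IntervalIntegrable (fun s => Ak c s y (f s y)) volume 0 x := by
    intro f Wf T hT hT2 hfc hfb y x hx
    refine intInt_of_bound _ (fun s => (M * Wf) * s ^ (δ - 1)) T x hx
      (hcomp1 f T (hcontg f T hfc) y) ?_ ?_
    · intro s hs
      have hs2 : s ∈ Ioc (0:ℝ) 2 := ⟨hs.1, hs.2.trans hT2⟩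
      calc ‖Ak c s y (f s y)‖ ≤ M * s ^ (δ - 1) * ‖f s y‖ := hA s hs2 y _
        _ ≤ M * s ^ (δ - 1) * Wf :=
            mul_le_mul_of_nonneg_left (hfb s ⟨hs.1.le, hs.2⟩ y) (hMs s hs.1)
        _ = (M * Wf) * s ^ (δ - 1) := by ring
    · have := (integral_Kpow δ (M * Wf) T hδ hT.le).1
      rw [intervalIntegrable_iff, uIoc_of_le hT.le] at this
      exact this
  -- the main induction on Picard iterates
  have hWb : ∀ k : ℕ,
      (∀ x ∈ Icc (0:ℝ) 2, ∀ y, ‖w k x y‖ ≤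
        B * ∑ j ∈ Finset.range (k+1), r ^ j / (j.factorial : ℝ)) →
      ∀ x ∈ Icc (0:ℝ) 2, ∀ y, ‖w k x y‖ ≤ W := by
    intro k h x hx y
    exact (h x hx y).trans (mul_le_mul_of_nonneg_left (hpart _) hB0)
  have main : ∀ k : ℕ,
      (ContinuousOn (fun p : ℝ × Y => w k p.1 p.2) (Icc 0 2 ×ˢ univ)) ∧
      (∀ x ∈ Icc (0:ℝ) 2, ∀ y, ‖w k x y‖ ≤
        B * ∑ j ∈ Finset.range (k+1), r ^ j / (j.factorial : ℝ)) ∧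
      (∀ x ∈ Icc (0:ℝ) 2, ∀ y, ‖w (k+1) x y - w k x y‖ ≤
        B * (M/δ) ^ (k+1) * (x ^ δ) ^ (k+1) / ((k+1).factorial : ℝ)) := by
    intro k
    induction k with
    | zero =>
      refine ⟨(hu₀.comp continuous_snd).continuousOn, ?_, ?_⟩
      · intro x hx y
        simpa [hwdef, pic_zero, Nat.factorial] using hB y
      · intro x hx y
        have he : w 1 x y - w 0 x y = ∫ s in (0:ℝ)..x, Ak c s y (u₀ y) := by
          simp [hwdef, pic_succ, pic_zero]
        rw [he]
        have hstep := iter_step (fun s => Ak c s y (u₀ y)) (M * B) δ x hδ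
          (by positivity) hx.1 ?_
        · refine hstep.trans (le_of_eq ?_)
          simp [Nat.factorial]
          ring
        · intro s hs
          have hs2 : s ∈ Ioc (0:ℝ) 2 := ⟨hs.1, hs.2.trans hx.2⟩
          calc ‖Ak c s y (u₀ y)‖ ≤ M * s ^ (δ - 1) * ‖u₀ y‖ := hA s hs2 y _
            _ ≤ M * s ^ (δ - 1) * B :=
                mul_le_mul_of_nonneg_left (hB y) (hMs s hs.1)
            _ = (M * B) * s ^ (δ - 1) := by ring
    | succ k ih =>
      obtain ⟨ihc, ihb, ihd⟩ := ih
      have hWk : ∀ x ∈ Icc (0:ℝ) 2, ∀ y, ‖w k x y‖ ≤ W := hWb k ihb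
      -- continuity at step k+1
      have hck1 : ContinuousOn (fun p : ℝ × Y => w (k+1) p.1 p.2) (Icc 0 2 ×ˢ univ) := by
        have hci := contOn_param_integral (fun s y => Ak c s y (w k s y))
          (fun s => (M * W) * s ^ (δ - 1)) 2 two_pos (hcontg _ 2 ihc) ?_ ?_
        · simp only [hwdef, pic_succ]
          exact ((hu₀.comp continuous_snd).continuousOn).add hci
        · intro s hs y
          calc ‖Ak c s y (w k s y)‖ ≤ M * s ^ (δ - 1) * ‖w k s y‖ := hA s hs y _
            _ ≤ M * s ^ (δ - 1) * W :=
              mul_le_mul_of_nonneg_left (hWk s ⟨hs.1.le, hs.2⟩ y) (hMs s hs.1)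
            _ = (M * W) * s ^ (δ - 1) := by ring
        · have := (integral_Kpow δ (M * W) 2 hδ two_pos.le).1
          rw [intervalIntegrable_iff, uIoc_of_le two_pos.le] at this
          exact this
      -- sup-norm bound at step k+1
      have hbk1 : ∀ x ∈ Icc (0:ℝ) 2, ∀ y, ‖w (k+1) x y‖ ≤
          B * ∑ j ∈ Finset.range (k+2), r ^ j / (j.factorial : ℝ) := by
        intro x hx y
        calc ‖w (k+1) x y‖
            = ‖w k x y + (w (k+1) x y - w k x y)‖ := by
              rw [show w k x y + (w (k+1) x y - w k x y) = w (k+1) x y from by abel]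
          _ ≤ ‖w k x y‖ + ‖w (k+1) x y - w k x y‖ := norm_add_le _ _
          _ ≤ B * ∑ j ∈ Finset.range (k+1), r ^ j / (j.factorial : ℝ)
              + B * (M/δ) ^ (k+1) * (x ^ δ) ^ (k+1) / ((k+1).factorial : ℝ) :=
              add_le_add (ihb x hx y) (ihd x hx y)
          _ ≤ B * ∑ j ∈ Finset.range (k+1), r ^ j / (j.factorial : ℝ)
              + B * (r ^ (k+1) / ((k+1).factorial : ℝ)) := by
              have hkk := hkey k x hx
              refine add_le_add_right ?_ _
              calc B * (M/δ) ^ (k+1) * (x ^ δ) ^ (k+1) / ((k+1).factorial : ℝ)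
                  = B * ((M/δ) ^ (k+1) * (x ^ δ) ^ (k+1)) / ((k+1).factorial : ℝ) := by
                    ring
                _ ≤ B * r ^ (k+1) / ((k+1).factorial : ℝ) := by gcongr
                _ = B * (r ^ (k+1) / ((k+1).factorial : ℝ)) := by ring
          _ = B * ∑ j ∈ Finset.range (k+2), r ^ j / (j.factorial : ℝ) := by
              conv_rhs => rw [Finset.sum_range_succ]
              ring
      -- increment bound at step k+1
      have hWk1 : ∀ x ∈ Icc (0:ℝ) 2, ∀ y, ‖w (k+1) x y‖ ≤ W := hWb (k+1) hbk1
      have hdk1 : ∀ x ∈ Icc (0:ℝ) 2, ∀ y, ‖w (k+2) x y - w (k+1) x y‖ ≤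
          B * (M/δ) ^ (k+2) * (x ^ δ) ^ (k+2) / ((k+2).factorial : ℝ) := by
        intro x hx y
        have hint1 := hintg (w (k+1)) W 2 two_pos le_rfl hck1 hWk1 y x hx
        have hint0 := hintg (w k) W 2 two_pos le_rfl ihc hWk y x hx
        have he : w (k+2) x y - w (k+1) x y
            = ∫ s in (0:ℝ)..x, Ak c s y (w (k+1) s y - w k s y) := by
          have e1 : w (k+2) x y = u₀ y + ∫ s in (0:ℝ)..x, Ak c s y (w (k+1) s y) := rfl
          have e2 : w (k+1) x y = u₀ y + ∫ s in (0:ℝ)..x, Ak c s y (w k s y) := rfl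
          rw [e1, e2, add_sub_add_left_eq_sub, ← intervalIntegral.integral_sub hint1 hint0]
          congr 1
          funext s
          rw [Ak_sub]
        rw [he]
        have hq : (0:ℝ) < δ * ((k:ℝ) + 2) := mul_pos hδ (by positivity)
        have hstep := iter_step (fun s => Ak c s y (w (k+1) s y - w k s y))
          (M * B * (M/δ) ^ (k+1) / ((k+1).factorial : ℝ)) (δ * ((k:ℝ) + 2)) x hq
          (div_nonneg (mul_nonneg (mul_nonneg hM0 hB0) (pow_nonneg hMδ _))
            (Nat.cast_nonneg _)) hx.1 ?_
        · refine hstep.trans (le_of_eq ?_)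
          have hx0 : (0:ℝ) ≤ x := hx.1
          have e3 : x ^ (δ * ((k:ℝ) + 2)) = (x ^ δ) ^ (k+2) := by
            have := hxp x hx0 (k+2)
            push_cast at this
            exact this
          have e4 : ((k+2).factorial : ℝ) = ((k:ℝ) + 2) * ((k+1).factorial : ℝ) := by
            rw [show k + 2 = (k+1) + 1 by ring, Nat.factorial_succ]
            push_cast
            ring
          rw [e3, e4, pow_succ (M/δ) (k+1)]
          have hf0 : ((k+1).factorial : ℝ) ≠ 0 := Nat.cast_ne_zero.2 (Nat.factorial_ne_zero _)
          have hk0 : ((k:ℝ) + 2) ≠ 0 := by positivity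
          field_simp
        · intro s hs
          have hs0 : (0:ℝ) < s := hs.1
          have hs2 : s ∈ Ioc (0:ℝ) 2 := ⟨hs.1, hs.2.trans hx.2⟩
          have hsI : s ∈ Icc (0:ℝ) 2 := ⟨hs.1.le, hs2.2⟩
          calc ‖Ak c s y (w (k+1) s y - w k s y)‖
              ≤ M * s ^ (δ - 1) * ‖w (k+1) s y - w k s y‖ := hA s hs2 y _
            _ ≤ M * s ^ (δ - 1) *
                (B * (M/δ) ^ (k+1) * (s ^ δ) ^ (k+1) / ((k+1).factorial : ℝ)) :=
                mul_le_mul_of_nonneg_left (ihd s hsI y) (hMs s hs0)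
            _ = M * B * (M/δ) ^ (k+1) / ((k+1).factorial : ℝ)
                * (s ^ (δ - 1) * (s ^ δ) ^ (k+1)) := by ring
            _ = M * B * (M/δ) ^ (k+1) / ((k+1).factorial : ℝ)
                * s ^ (δ * ((k:ℝ) + 2) - 1) := by
                congr 1
                have e5 : (s ^ δ) ^ (k+1) = s ^ (δ * ((k:ℝ) + 1)) := by
                  have := hxp s hs0.le (k+1)
                  push_cast at this
                  exact this.symm
                rw [e5, ← Real.rpow_add hs0]
                congr 1
                ring
      exact ⟨hck1, hbk1, hdk1⟩

  -- increments, their bounds, and the limit function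
  set d : ℕ → ℝ → Y → Fin N → ℝ := fun k x y => w (k+1) x y - w k x y with hddef
  set bnd : ℕ → ℝ := fun k => B * r ^ (k+1) / ((k+1).factorial : ℝ) with hbnddef
  have hbnd0 : ∀ k, 0 ≤ bnd k :=
    fun k => div_nonneg (mul_nonneg hB0 (pow_nonneg hr0 _)) (Nat.cast_nonneg _)
  have hbnd_sum : Summable bnd := by
    have h1 : Summable (fun n : ℕ => B * r ^ n / (n.factorial : ℝ)) := by
      simpa [mul_div_assoc] using (Real.summable_pow_div_factorial r).mul_left B
    rw [hbnddef]
    exact (summable_nat_add_iff 1).2 h1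
  have hdb : ∀ k, ∀ p ∈ (Icc (0:ℝ) 2 ×ˢ (univ : Set Y)), ‖d k p.1 p.2‖ ≤ bnd k := by
    rintro k ⟨x, y⟩ ⟨hx, -⟩
    refine ((main k).2.2 x hx y).trans ?_
    have hkk := hkey k x hx
    calc B * (M/δ) ^ (k+1) * (x ^ δ) ^ (k+1) / ((k+1).factorial : ℝ)
        = B * ((M/δ) ^ (k+1) * (x ^ δ) ^ (k+1)) / ((k+1).factorial : ℝ) := by ring
      _ ≤ B * r ^ (k+1) / ((k+1).factorial : ℝ) := by gcongr
  set u : ℝ → Y → Fin N → ℝ := fun x y => u₀ y + ∑' k, d k x y with hudef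
  have hw_sum : ∀ k x y, w k x y = u₀ y + ∑ j ∈ Finset.range k, d j x y := by
    intro k x y
    have h1 : ∑ j ∈ Finset.range k, d j x y = w k x y - w 0 x y := by
      simpa [hddef] using Finset.sum_range_sub (f := fun j => w j x y) k
    have h2 : w 0 x y = u₀ y := rfl
    rw [h1, h2]
    abel
  have hTU0 := tendstoUniformlyOn_tsum_nat hbnd_sum
    (f := fun k (p : ℝ × Y) => d k p.1 p.2) (s := Icc (0:ℝ) 2 ×ˢ (univ : Set Y))
    (fun k p hp => hdb k p hp)
  have hTU : TendstoUniformlyOn (fun k (p : ℝ × Y) => w k p.1 p.2)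
      (fun p : ℝ × Y => u p.1 p.2) atTop (Icc 0 2 ×ˢ univ) := by
    have hconst : TendstoUniformlyOn (fun (_ : ℕ) (p : ℝ × Y) => u₀ p.2)
        (fun p : ℝ × Y => u₀ p.2) atTop (Icc 0 2 ×ˢ univ) := by
      rw [Metric.tendstoUniformlyOn_iff]
      intro ε hε
      exact Eventually.of_forall fun k p hp => by simpa using hε
    have := hconst.add hTU0
    have heq : (fun k (p : ℝ × Y) => w k p.1 p.2)
        = ((fun (_ : ℕ) (p : ℝ × Y) => u₀ p.2) +
          fun k (p : ℝ × Y) => ∑ j ∈ Finset.range k, d j p.1 p.2) := by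
      funext k p
      simpa using hw_sum k p.1 p.2
    rw [heq]
    exact this
  have hconts : ∀ k, ContinuousOn (fun p : ℝ × Y => w k p.1 p.2) (Icc 0 2 ×ˢ univ) :=
    fun k => (main k).1
  have hu_cont2 : ContinuousOn (fun p : ℝ × Y => u p.1 p.2) (Icc 0 2 ×ˢ univ) :=
    hTU.continuousOn (Eventually.of_forall hconts).frequently
  have hw0' : ∀ k y, w k 0 y = u₀ y := by
    intro k y
    cases k with
    | zero => rfl
    | succ k => simp [hwdef, pic_succ]
  have hu0 : ∀ y, u 0 y = u₀ y := by
    intro y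
    have : ∀ k, d k 0 y = 0 := by
      intro k; simp [hddef, hw0']
    simp [hudef, this, tsum_zero]
  have hsum_pt : ∀ x ∈ Icc (0:ℝ) 2, ∀ y, Summable (fun k => ‖d k x y‖) := by
    intro x hx y
    exact Summable.of_nonneg_of_le (fun k => norm_nonneg _)
      (fun k => hdb k (x, y) ⟨hx, mem_univ _⟩) hbnd_sum
  have hsum_pt' : ∀ x ∈ Icc (0:ℝ) 2, ∀ y, Summable (fun k => d k x y) :=
    fun x hx y => (hsum_pt x hx y).of_norm
  set W₂ : ℝ := B + ∑' k, bnd k with hW₂def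
  have hW₂ : ∀ x ∈ Icc (0:ℝ) 2, ∀ y, ‖u x y‖ ≤ W₂ := by
    intro x hx y
    calc ‖u x y‖ ≤ ‖u₀ y‖ + ‖∑' k, d k x y‖ := norm_add_le _ _
      _ ≤ B + ∑' k, ‖d k x y‖ :=
          add_le_add (hB y) (norm_tsum_le_tsum_norm (hsum_pt x hx y))
      _ ≤ B + ∑' k, bnd k := by
          refine add_le_add_right (Summable.tsum_le_tsum ?_ (hsum_pt x hx y) hbnd_sum) _
          exact fun k => hdb k (x, y) ⟨hx, mem_univ _⟩
  have hintu : ∀ y, ∀ x ∈ Icc (0:ℝ) 2,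
      IntervalIntegrable (fun s => Ak c s y (u s y)) volume 0 x :=
    hintg u W₂ 2 two_pos le_rfl hu_cont2 hW₂
  -- the integral equation for the limit
  have hIE : ∀ x ∈ Icc (0:ℝ) 2, ∀ y,
      u x y = u₀ y + ∫ s in (0:ℝ)..x, Ak c s y (u s y) := by
    intro x hx y
    have h1 : Tendsto (fun k => w (k+1) x y) atTop (𝓝 (u x y)) :=
      (hTU.tendsto_at (show ((x : ℝ), y) ∈ Icc (0:ℝ) 2 ×ˢ (univ : Set Y) from
        ⟨hx, mem_univ _⟩)).comp (tendsto_add_atTop_nat 1)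
    have h2 : Tendsto (fun k => w (k+1) x y) atTop
        (𝓝 (u₀ y + ∫ s in (0:ℝ)..x, Ak c s y (u s y))) := by
      have he : ∀ k : ℕ, w (k+1) x y
          = u₀ y + ∫ s in (0:ℝ)..x, Ak c s y (w k s y) := fun k => rfl
      simp only [he]
      refine Tendsto.const_add _ ?_
      rw [Metric.tendsto_atTop]
      intro ε hε
      set Q : ℝ := M * 2 ^ δ / δ + 1 with hQdef
      have hQ0 : 0 < Q := by
        rw [hQdef]
        have h00 : 0 ≤ M * 2 ^ δ / δ := div_nonneg (mul_nonneg hM0 h2δ.le) hδ.le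
        linarith
      set ε' : ℝ := ε / Q with hε'def
      have hε'0 : 0 < ε' := div_pos hε hQ0
      obtain ⟨n₀, hn₀⟩ := Filter.eventually_atTop.1
        ((Metric.tendstoUniformlyOn_iff.1 hTU) ε' hε'0)
      refine ⟨n₀, fun k hk => ?_⟩
      have hbd : ∀ s ∈ Ioc (0:ℝ) x, ‖Ak c s y (w k s y - u s y)‖ ≤ (M * ε') * s ^ (δ - 1) := by
        intro s hs
        have hs2 : s ∈ Ioc (0:ℝ) 2 := ⟨hs.1, hs.2.trans hx.2⟩
        have hd1 : ‖w k s y - u s y‖ ≤ ε' := by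
          have := hn₀ k hk (s, y) ⟨⟨hs.1.le, hs2.2⟩, mem_univ _⟩
          rw [dist_comm, dist_eq_norm] at this
          exact this.le
        calc ‖Ak c s y (w k s y - u s y)‖
            ≤ M * s ^ (δ - 1) * ‖w k s y - u s y‖ := hA s hs2 y _
          _ ≤ M * s ^ (δ - 1) * ε' := mul_le_mul_of_nonneg_left hd1 (hMs s hs.1)
          _ = (M * ε') * s ^ (δ - 1) := by ring
      have hdist : dist (∫ s in (0:ℝ)..x, Ak c s y (w k s y))
          (∫ s in (0:ℝ)..x, Ak c s y (u s y)) ≤ (M * ε') * x ^ δ / δ := by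
        rw [dist_eq_norm, ← intervalIntegral.integral_sub
          (hintg (w k) W 2 two_pos le_rfl (hconts k)
            (fun z hz yy => (hWb k (main k).2.1) z hz yy) y x hx)
          (hintu y x hx)]
        have heq2 : (fun s => Ak c s y (w k s y) - Ak c s y (u s y))
            = fun s => Ak c s y (w k s y - u s y) := by
          funext s; rw [Ak_sub]
        rw [show (∫ s in (0:ℝ)..x, (Ak c s y (w k s y) - Ak c s y (u s y)))
            = ∫ s in (0:ℝ)..x, Ak c s y (w k s y - u s y) from by rw [heq2]]
        exact iter_step _ (M * ε') δ x hδ (mul_nonneg hM0 hε'0.le) hx.1 hbd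
      refine lt_of_le_of_lt hdist ?_
      have hx2δ : x ^ δ ≤ 2 ^ δ := Real.rpow_le_rpow hx.1 hx.2 hδ.le
      calc (M * ε') * x ^ δ / δ ≤ (M * ε') * 2 ^ δ / δ := by
            have hMε : 0 ≤ M * ε' := mul_nonneg hM0 hε'0.le
            gcongr
        _ = (M * 2 ^ δ / δ) * ε' := by ring
        _ < Q * ε' := by
            have := mul_lt_mul_of_pos_right (show M * 2 ^ δ / δ < Q by
              rw [hQdef]; linarith) hε'0
            exact this
        _ = ε := by
            rw [hε'def]
            field_simp
    exact tendsto_nhds_unique h1 h2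

  -- the ODE for the limit
  have hderiv : ∀ y, ∀ x ∈ Ioc (0:ℝ) 1,
      HasDerivAt (fun t => u t y) (Ak c x y (u x y)) x := by
    intro y x hx
    have hx2 : x ∈ Ioo (0:ℝ) 2 := ⟨hx.1, lt_of_le_of_lt hx.2 one_lt_two⟩
    have hgc : ContinuousOn (fun s => Ak c s y (u s y)) (Ioc 0 2) :=
      hcomp1 u 2 (hcontg u 2 hu_cont2) y
    have hgIoo : ContinuousOn (fun s => Ak c s y (u s y)) (Ioo 0 2) :=
      hgc.mono Ioo_subset_Ioc_self
    have hmeas : StronglyMeasurableAtFilter (fun s => Ak c s y (u s y)) (𝓝 x) :=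
      hgIoo.stronglyMeasurableAtFilter isOpen_Ioo x hx2
    have hca : ContinuousAt (fun s => Ak c s y (u s y)) x :=
      hgIoo.continuousAt (Ioo_mem_nhds hx2.1 hx2.2)
    have hFTC := intervalIntegral.integral_hasDerivAt_right
      (hintu y x ⟨hx.1.le, hx2.2.le⟩) hmeas hca
    have heq : (fun t => u₀ y + ∫ s in (0:ℝ)..t, Ak c s y (u s y))
        =ᶠ[𝓝 x] fun t => u t y := by
      filter_upwards [Ioo_mem_nhds hx2.1 hx2.2] with t ht
      exact (hIE t ⟨ht.1.le, ht.2.le⟩ y).symm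
    exact (hFTC.const_add (u₀ y)).congr_of_eventuallyEq heq.symm
  have hsol : IsSingODESol c u₀ u := by
    refine ⟨hu_cont2.mono (prod_mono (Icc_subset_Icc_right one_le_two) subset_rfl),
      hu0, ?_⟩
    intro y x hx
    refine ⟨Ak c x y (u x y), hderiv y x hx, ?_⟩
    have hx0 : x ≠ 0 := ne_of_gt hx.1
    have h1 : x • Ak c x y (u x y) = -((c x y).mulVec (u x y)) := by
      rw [Ak, smul_smul, show x * -(x⁻¹) = -1 from by field_simp, neg_one_smul]
    rw [h1, neg_add_cancel]
  -- the `O(x^δ)` estimate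
  have hest : ∀ x ∈ Icc (0:ℝ) 1, ∀ y, ‖u x y - u₀ y‖ ≤ (∑' k, bnd k) * x ^ δ := by
    intro x hx y
    have hx2 : x ∈ Icc (0:ℝ) 2 := ⟨hx.1, hx.2.trans one_le_two⟩
    have hxδ1 : x ^ δ ≤ 1 := Real.rpow_le_one hx.1 hx.2 hδ.le
    have hxδ0 : 0 ≤ x ^ δ := Real.rpow_nonneg hx.1 δ
    have hterm : ∀ k, ‖d k x y‖ ≤ bnd k * x ^ δ := by
      intro k
      refine ((main k).2.2 x hx2 y).trans ?_
      have e1 : (x ^ δ) ^ (k+1) = (x ^ δ) ^ k * x ^ δ := pow_succ _ _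
      have e2 : (x ^ δ) ^ k ≤ 1 := pow_le_one₀ hxδ0 hxδ1
      have e3 : (M/δ) ^ (k+1) ≤ r ^ (k+1) := by
        refine pow_le_pow_left₀ hMδ ?_ _
        rw [hrdef]
        exact le_mul_of_one_le_right hMδ (Real.one_le_rpow one_le_two hδ.le)
      calc B * (M/δ) ^ (k+1) * (x ^ δ) ^ (k+1) / ((k+1).factorial : ℝ)
          = B * (M/δ) ^ (k+1) * ((x ^ δ) ^ k * x ^ δ) / ((k+1).factorial : ℝ) := by
            rw [e1]
        _ ≤ B * r ^ (k+1) * (1 * x ^ δ) / ((k+1).factorial : ℝ) := by gcongr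
        _ = bnd k * x ^ δ := by rw [hbnddef]; ring
    have he : u x y - u₀ y = ∑' k, d k x y := by
      rw [hudef]
      exact add_sub_cancel_left _ _
    rw [he]
    calc ‖∑' k, d k x y‖ ≤ ∑' k, ‖d k x y‖ :=
          norm_tsum_le_tsum_norm (hsum_pt x hx2 y)
      _ ≤ ∑' k, bnd k * x ^ δ :=
          Summable.tsum_le_tsum hterm (hsum_pt x hx2 y) (hbnd_sum.mul_right _)
      _ = (∑' k, bnd k) * x ^ δ := Summable.tsum_mul_right _ hbnd_sum
  -- the Picard iterate clause
  have hpic : ∀ v : ℕ → ℝ → Y → Fin N → ℝ,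
      (∀ x y, v 0 x y = u₀ y) →
      (∀ k x y, v (k + 1) x y
          = u₀ y + ∫ s in (0 : ℝ)..x, (-(s⁻¹)) • (c s y).mulVec (v k s y)) →
      TendstoUniformlyOn (fun k (p : ℝ × Y) => v k p.1 p.2)
        (fun p : ℝ × Y => u p.1 p.2) Filter.atTop (Icc 0 1 ×ˢ univ) := by
    intro v hv0 hvrec
    have hveq : ∀ k x y, v k x y = w k x y := by
      intro k
      induction k with
      | zero => intro x y; exact hv0 x y
      | succ k ih =>
        intro x y
        rw [hvrec]
        have : (fun s => (-(s⁻¹)) • (c s y).mulVec (v k s y))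
            = fun s => Ak c s y (w k s y) := by
          funext s
          rw [ih s y]
          rfl
        rw [this]
        rfl
    have heqv : (fun k (p : ℝ × Y) => v k p.1 p.2)
        = fun k (p : ℝ × Y) => w k p.1 p.2 := by
      funext k p
      exact hveq k p.1 p.2
    rw [heqv]
    exact hTU.mono (prod_mono (Icc_subset_Icc_right one_le_two) subset_rfl)

  -- uniqueness
  have huniq : ∀ u₁ u₂ : ℝ → Y → Fin N → ℝ, IsSingODESol c u₀ u₁ → IsSingODESol c u₀ u₂ →
      ∀ x ∈ Icc (0 : ℝ) 1, ∀ y, u₁ x y = u₂ x y := by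
    have hder : ∀ u' : ℝ → Y → Fin N → ℝ,
        (∀ y, ∀ x ∈ Ioc (0 : ℝ) 1, ∃ dd : Fin N → ℝ,
          HasDerivAt (fun t => u' t y) dd x ∧ x • dd + (c x y).mulVec (u' x y) = 0) →
        ∀ y, ∀ x ∈ Ioc (0:ℝ) 1, HasDerivAt (fun t => u' t y) (Ak c x y (u' x y)) x := by
      intro u' hprop y x hx
      obtain ⟨dd, hdd, halg⟩ := hprop y x hx
      have hx0 : x ≠ 0 := ne_of_gt hx.1
      have h1 : x • dd = -((c x y).mulVec (u' x y)) := eq_neg_of_add_eq_zero_left halg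
      have h2 : dd = Ak c x y (u' x y) := by
        calc dd = x⁻¹ • (x • dd) := by rw [smul_smul, inv_mul_cancel₀ hx0, one_smul]
          _ = x⁻¹ • (-((c x y).mulVec (u' x y))) := by rw [h1]
          _ = Ak c x y (u' x y) := by rw [Ak, smul_neg, ← neg_smul]
      rwa [h2] at hdd
    have hintU : ∀ u' : ℝ → Y → Fin N → ℝ,
        ContinuousOn (fun p : ℝ × Y => u' p.1 p.2) (Icc 0 1 ×ˢ univ) →
        ∃ W' : ℝ, (∀ x ∈ Icc (0:ℝ) 1, ∀ y, ‖u' x y‖ ≤ W') ∧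
          (∀ y, ∀ x ∈ Icc (0:ℝ) 1,
            IntervalIntegrable (fun s => Ak c s y (u' s y)) volume 0 x) := by
      intro u' hc'
      obtain ⟨W₀', hW₀'⟩ :=
        (isCompact_Icc.prod isCompact_univ).exists_bound_of_continuousOn hc'
      refine ⟨W₀', fun x hx y => hW₀' (x, y) ⟨hx, mem_univ _⟩, ?_⟩
      exact hintg u' W₀' 1 one_pos one_le_two hc'
        (fun x hx y => hW₀' (x, y) ⟨hx, mem_univ _⟩)
    have hIE' : ∀ u' : ℝ → Y → Fin N → ℝ,
        ContinuousOn (fun p : ℝ × Y => u' p.1 p.2) (Icc 0 1 ×ˢ univ) →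
        (∀ y, u' 0 y = u₀ y) →
        (∀ y, ∀ x ∈ Ioc (0:ℝ) 1, HasDerivAt (fun t => u' t y) (Ak c x y (u' x y)) x) →
        ∀ x ∈ Icc (0:ℝ) 1, ∀ y,
          u' x y = u₀ y + ∫ s in (0:ℝ)..x, Ak c s y (u' s y) := by
      intro u' hc' h0' hd' x hx y
      obtain ⟨W', hW'b, hW'i⟩ := hintU u' hc'
      rcases hx.1.eq_or_lt with h|hx0
      · rw [← h]
        simp [h0' y]
      · haveI := left_nhdsWithin_Ioc_neBot hx0
        have hFTC2 : ∀ ε ∈ Ioc (0:ℝ) x,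
            u' x y - u' ε y = ∫ s in ε..x, Ak c s y (u' s y) := by
          intro ε hε
          refine (intervalIntegral.integral_eq_sub_of_hasDerivAt
            (f := fun t => u' t y) (f' := fun s => Ak c s y (u' s y))
            (a := ε) (b := x) ?_ ?_).symm
          · intro t ht
            rw [uIcc_of_le hε.2] at ht
            exact hd' y t ⟨lt_of_lt_of_le hε.1 ht.1, ht.2.trans hx.2⟩
          · refine (hW'i y x hx).mono_set ?_
            refine uIcc_subset_uIcc ?_ ?_ <;> rw [uIcc_of_le hx.1]
            · exact ⟨hε.1.le, hε.2⟩
            · exact ⟨hx.1, le_rfl⟩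
        have hz : Tendsto (fun ε => ∫ s in (0:ℝ)..ε, Ak c s y (u' s y))
            (𝓝[Ioc (0:ℝ) x] 0) (𝓝 0) := by
          have hb1 : ∀ ε ∈ Ioc (0:ℝ) x,
              ‖∫ s in (0:ℝ)..ε, Ak c s y (u' s y)‖ ≤ (M * W') * ε ^ δ / δ := by
            intro ε hε
            refine iter_step _ (M * W') δ ε hδ ?_ hε.1.le ?_
            · have h00 : 0 ≤ W' := (norm_nonneg _).trans (hW'b x hx y)
              exact mul_nonneg hM0 h00
            · intro s hs
              have hs1 : s ∈ Icc (0:ℝ) 1 := ⟨hs.1.le, (hs.2.trans hε.2).trans hx.2⟩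
              have hs2 : s ∈ Ioc (0:ℝ) 2 := ⟨hs.1, hs1.2.trans one_le_two⟩
              calc ‖Ak c s y (u' s y)‖ ≤ M * s ^ (δ - 1) * ‖u' s y‖ := hA s hs2 y _
                _ ≤ M * s ^ (δ - 1) * W' :=
                    mul_le_mul_of_nonneg_left (hW'b s hs1 y) (hMs s hs.1)
                _ = (M * W') * s ^ (δ - 1) := by ring
          have hb2 : Tendsto (fun ε : ℝ => (M * W') * ε ^ δ / δ)
              (𝓝[Ioc (0:ℝ) x] 0) (𝓝 0) := by
            have h3 : Tendsto (fun ε : ℝ => ε ^ δ) (𝓝 0) (𝓝 ((0:ℝ) ^ δ)) :=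
              Real.continuousAt_rpow_const 0 δ (Or.inr hδ.le)
            rw [Real.zero_rpow hδ.ne'] at h3
            have h4 := (h3.const_mul (M * W')).div_const δ
            rw [mul_zero, zero_div] at h4
            exact h4.mono_left nhdsWithin_le_nhds
          refine squeeze_zero_norm' ?_ hb2
          filter_upwards [self_mem_nhdsWithin] with ε hε
          exact hb1 ε hε
        have hT2 : Tendsto (fun ε => ∫ s in ε..x, Ak c s y (u' s y))
            (𝓝[Ioc (0:ℝ) x] 0) (𝓝 (∫ s in (0:ℝ)..x, Ak c s y (u' s y))) := by
          have heq2 : ∀ ε ∈ Ioc (0:ℝ) x, (∫ s in (0:ℝ)..x, Ak c s y (u' s y))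
              - (∫ s in (0:ℝ)..ε, Ak c s y (u' s y)) = ∫ s in ε..x, Ak c s y (u' s y) :=
            fun ε hε => integral_interval_sub_left (hW'i y x hx)
              (hW'i y ε ⟨hε.1.le, hε.2.trans hx.2⟩)
          have h5 : Tendsto (fun ε => (∫ s in (0:ℝ)..x, Ak c s y (u' s y))
              - ∫ s in (0:ℝ)..ε, Ak c s y (u' s y)) (𝓝[Ioc (0:ℝ) x] 0)
              (𝓝 ((∫ s in (0:ℝ)..x, Ak c s y (u' s y)) - 0)) :=
            tendsto_const_nhds.sub hz
          rw [sub_zero] at h5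
          refine h5.congr' ?_
          filter_upwards [self_mem_nhdsWithin] with ε hε
          exact heq2 ε hε
        have hT1 : Tendsto (fun ε => u' x y - u' ε y) (𝓝[Ioc (0:ℝ) x] 0)
            (𝓝 (u' x y - u₀ y)) := by
          have hcy : ContinuousOn (fun t => u' t y) (Icc 0 1) :=
            hc'.comp (f := fun t : ℝ => ((t, y) : ℝ × Y))
              (continuous_id.prodMk continuous_const).continuousOn
              (fun t ht => ⟨ht, mem_univ _⟩)
          have h6 : Tendsto (fun ε => u' ε y) (𝓝[Ioc (0:ℝ) x] 0) (𝓝 (u' 0 y)) :=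
            ((hcy 0 ⟨le_rfl, zero_le_one⟩).mono
              (fun t ht => ⟨ht.1.le, ht.2.trans hx.2⟩)).tendsto
          rw [h0' y] at h6
          exact tendsto_const_nhds.sub h6
        have h7 : Tendsto (fun ε => ∫ s in ε..x, Ak c s y (u' s y))
            (𝓝[Ioc (0:ℝ) x] 0) (𝓝 (u' x y - u₀ y)) := by
          refine hT1.congr' ?_
          filter_upwards [self_mem_nhdsWithin] with ε hε
          exact hFTC2 ε hε
        have h8 : u' x y - u₀ y = ∫ s in (0:ℝ)..x, Ak c s y (u' s y) :=
          tendsto_nhds_unique h7 hT2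
        rw [← h8]
        abel
    rintro u₁ u₂ ⟨h1c, h10, h1d⟩ ⟨h2c, h20, h2d⟩
    have hie1 := hIE' u₁ h1c h10 (hder u₁ h1d)
    have hie2 := hIE' u₂ h2c h20 (hder u₂ h2d)
    obtain ⟨W1, hW1b, hW1i⟩ := hintU u₁ h1c
    obtain ⟨W2, hW2b, hW2i⟩ := hintU u₂ h2c
    obtain ⟨D₀, hD₀⟩ := (isCompact_Icc.prod isCompact_univ).exists_bound_of_continuousOn
      (h1c.sub h2c)
    set D : ℝ := max D₀ 0 with hDdef
    have hD0 : 0 ≤ D := le_max_right _ _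
    have hD : ∀ x ∈ Icc (0:ℝ) 1, ∀ y, ‖u₁ x y - u₂ x y‖ ≤ D :=
      fun x hx y => (hD₀ (x, y) ⟨hx, mem_univ _⟩).trans (le_max_left _ _)
    have hΔIE : ∀ x ∈ Icc (0:ℝ) 1, ∀ y,
        u₁ x y - u₂ x y = ∫ s in (0:ℝ)..x, Ak c s y (u₁ s y - u₂ s y) := by
      intro x hx y
      rw [hie1 x hx y, hie2 x hx y, add_sub_add_left_eq_sub,
        ← intervalIntegral.integral_sub (hW1i y x hx) (hW2i y x hx)]
      congr 1
      funext s
      rw [Ak_sub]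
    have hind : ∀ k : ℕ, ∀ x ∈ Icc (0:ℝ) 1, ∀ y,
        ‖u₁ x y - u₂ x y‖ ≤ D * (M/δ) ^ k * (x ^ δ) ^ k / (k.factorial : ℝ) := by
      intro k
      induction k with
      | zero =>
        intro x hx y
        simpa using hD x hx y
      | succ k ihk =>
        intro x hx y
        rw [hΔIE x hx y]
        have hq : (0:ℝ) < δ * ((k:ℝ) + 1) := mul_pos hδ (by positivity)
        have hstep := iter_step (fun s => Ak c s y (u₁ s y - u₂ s y))
          (M * D * (M/δ) ^ k / (k.factorial : ℝ)) (δ * ((k:ℝ) + 1)) x hq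
          (div_nonneg (mul_nonneg (mul_nonneg hM0 hD0) (pow_nonneg hMδ _))
            (Nat.cast_nonneg _)) hx.1 ?_
        · refine hstep.trans (le_of_eq ?_)
          have e3 : x ^ (δ * ((k:ℝ) + 1)) = (x ^ δ) ^ (k+1) := by
            have := hxp x hx.1 (k+1)
            push_cast at this
            exact this
          have e4 : ((k+1).factorial : ℝ) = ((k:ℝ) + 1) * (k.factorial : ℝ) := by
            rw [Nat.factorial_succ]
            push_cast
            ring
          rw [e3, e4, pow_succ (M/δ) k]
          have hf0 : (k.factorial : ℝ) ≠ 0 := Nat.cast_ne_zero.2 (Nat.factorial_ne_zero _)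
          have hk0 : ((k:ℝ) + 1) ≠ 0 := by positivity
          field_simp
        · intro s hs
          have hs0 : (0:ℝ) < s := hs.1
          have hs1 : s ∈ Icc (0:ℝ) 1 := ⟨hs.1.le, hs.2.trans hx.2⟩
          have hs2 : s ∈ Ioc (0:ℝ) 2 := ⟨hs.1, hs1.2.trans one_le_two⟩
          calc ‖Ak c s y (u₁ s y - u₂ s y)‖
              ≤ M * s ^ (δ - 1) * ‖u₁ s y - u₂ s y‖ := hA s hs2 y _
            _ ≤ M * s ^ (δ - 1) * (D * (M/δ) ^ k * (s ^ δ) ^ k / (k.factorial : ℝ)) :=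
                mul_le_mul_of_nonneg_left (ihk s hs1 y) (hMs s hs0)
            _ = M * D * (M/δ) ^ k / (k.factorial : ℝ)
                * (s ^ (δ - 1) * (s ^ δ) ^ k) := by ring
            _ = M * D * (M/δ) ^ k / (k.factorial : ℝ)
                * s ^ (δ * ((k:ℝ) + 1) - 1) := by
                congr 1
                have e5 : (s ^ δ) ^ k = s ^ (δ * (k:ℝ)) := (hxp s hs0.le k).symm
                rw [e5, ← Real.rpow_add hs0]
                congr 1
                ring
    intro x hx y
    have hxδ1 : x ^ δ ≤ 1 := Real.rpow_le_one hx.1 hx.2 hδ.le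
    have hxδ0 : 0 ≤ x ^ δ := Real.rpow_nonneg hx.1 δ
    have hle : ∀ k : ℕ, ‖u₁ x y - u₂ x y‖ ≤ D * ((M/δ) ^ k / (k.factorial : ℝ)) := by
      intro k
      refine (hind k x hx y).trans ?_
      have e2 : (x ^ δ) ^ k ≤ 1 := pow_le_one₀ hxδ0 hxδ1
      calc D * (M/δ) ^ k * (x ^ δ) ^ k / (k.factorial : ℝ)
          ≤ D * (M/δ) ^ k * 1 / (k.factorial : ℝ) := by gcongr
        _ = D * ((M/δ) ^ k / (k.factorial : ℝ)) := by ring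
    have htend : Tendsto (fun k : ℕ => D * ((M/δ) ^ k / (k.factorial : ℝ)))
        atTop (𝓝 (D * 0)) :=
      (FloorSemiring.tendsto_pow_div_factorial_atTop (M/δ)).const_mul D
    rw [mul_zero] at htend
    have h9 : ‖u₁ x y - u₂ x y‖ ≤ 0 := ge_of_tendsto' htend hle
    exact sub_eq_zero.1 (norm_le_zero_iff.1 h9)
  exact ⟨⟨u, hsol, ⟨∑' k, bnd k, hest⟩, hpic⟩, huniq⟩
end

section
/- With V, h(x), S(x) as above (oriented 3-dimensional vector space with smooth family of inner products, shape operator S defined by ∂ₓh = −2h(S·,·)), let ⋆(x): Λ¹V* → Λ²V* be the Hodge star of h(x). Then ∂ₓ⋆ = ⋆ ∘ (2 S* − tr S), where S*: V* → V* is the dual of S. -/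
open Matrix

private lemma det_hasDerivAt (h h' : ℝ → Matrix (Fin 3) (Fin 3) ℝ) (x : ℝ)
    (hd : ∀ i j, HasDerivAt (fun t => h t i j) (h' x i j) x) :
    HasDerivAt (fun t => (h t).det) ((adjugate (h x) * h' x).trace) x := by
  have H := (((((((hd 0 0).mul (hd 1 1)).mul (hd 2 2)).sub
      (((hd 0 0).mul (hd 1 2)).mul (hd 2 1))).sub
      (((hd 0 1).mul (hd 1 0)).mul (hd 2 2))).add
      (((hd 0 1).mul (hd 1 2)).mul (hd 2 0))).add
      (((hd 0 2).mul (hd 1 0)).mul (hd 2 1))).sub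
      (((hd 0 2).mul (hd 1 1)).mul (hd 2 0))
  simp only [Matrix.det_fin_three]
  refine H.congr_deriv ?_
  symm
  simp [Matrix.adjugate_fin_three, Matrix.trace_fin_three, Matrix.mul_apply, Matrix.vecMul, dotProduct,
    Fin.sum_univ_three]
  ring

private lemma inv_entry_hasDerivAt (h h' : ℝ → Matrix (Fin 3) (Fin 3) ℝ) (x : ℝ)
    (hu : IsUnit (h x))
    (hd : ∀ i j, HasDerivAt (fun t => h t i j) (h' x i j) x) (i j : Fin 3) :
    HasDerivAt (fun t => (h t)⁻¹ i j) ((-((h x)⁻¹ * h' x * (h x)⁻¹)) i j) x := by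
  letI : NormedRing (Matrix (Fin 3) (Fin 3) ℝ) := Matrix.linftyOpNormedRing
  letI : NormedAlgebra ℝ (Matrix (Fin 3) (Fin 3) ℝ) := Matrix.linftyOpNormedAlgebra
  haveI : CompleteSpace (Matrix (Fin 3) (Fin 3) ℝ) := FiniteDimensional.complete ℝ _
  obtain ⟨u, hu⟩ := hu
  have hmat : HasDerivAt (fun t => h t) (h' x) x := by
    have key : ∀ M : Matrix (Fin 3) (Fin 3) ℝ,
        M = ∑ i : Fin 3, ∑ j : Fin 3, M i j • Matrix.single i j (1 : ℝ) := by
      intro M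
      simpa [Matrix.smul_single, smul_eq_mul] using
        Matrix.matrix_eq_sum_single M
    have h1 : HasDerivAt
        (fun t => ∑ i : Fin 3, ∑ j : Fin 3, (h t i j) • Matrix.single i j (1 : ℝ))
        (∑ i : Fin 3, ∑ j : Fin 3, (h' x i j) • Matrix.single i j (1 : ℝ)) x :=
      HasDerivAt.fun_sum fun i _ => HasDerivAt.fun_sum fun j _ => (hd i j).smul_const _
    rw [show (fun t => h t) = fun t =>
        ∑ i : Fin 3, ∑ j : Fin 3, (h t i j) • Matrix.single i j (1 : ℝ) from
      funext fun t => key (h t), key (h' x)]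
    exact h1
  have hinv : HasDerivAt (fun t => Ring.inverse (h t))
      ((-ContinuousLinearMap.mulLeftRight ℝ (Matrix (Fin 3) (Fin 3) ℝ) ↑u⁻¹ ↑u⁻¹) (h' x)) x :=
    (hu ▸ hasFDerivAt_ringInverse u :
      HasFDerivAt Ring.inverse (-ContinuousLinearMap.mulLeftRight ℝ _ ↑u⁻¹ ↑u⁻¹) (h x)).comp_hasDerivAt x hmat
  have hval : ((-ContinuousLinearMap.mulLeftRight ℝ (Matrix (Fin 3) (Fin 3) ℝ) ↑u⁻¹ ↑u⁻¹) (h' x)) =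
      -((h x)⁻¹ * h' x * (h x)⁻¹) := by
    have : (↑u⁻¹ : Matrix (Fin 3) (Fin 3) ℝ) = (h x)⁻¹ := by
      rw [Matrix.coe_units_inv, hu]
    simp [this, ContinuousLinearMap.mulLeftRight_apply]
  rw [hval] at hinv
  simp only [← Matrix.nonsing_inv_eq_ringInverse] at hinv
  have L : Matrix (Fin 3) (Fin 3) ℝ →L[ℝ] ℝ :=
    LinearMap.toContinuousLinearMap (Matrix.entryLinearMap ℝ ℝ i j)
  exact (LinearMap.toContinuousLinearMap
      (Matrix.entryLinearMap ℝ ℝ i j)).hasFDerivAt.comp_hasDerivAt x hinv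

/-- First variation of the Hodge star on 1-forms in dimension 3.  With `h(x)` a
smooth family of inner products on an oriented 3-dimensional vector space (Gram
matrices, symmetric positive definite, entrywise derivative `h'`) and the shape
operator `S(x)` defined by `S(x)ᵀ h(x) = −½ h'(x)`, the Hodge star
`⋆(x) : Λ¹ → Λ²` of `h(x)` — whose matrix in the bases `(dxⁱ)` of `Λ¹` and
`(½ε_{ijk} dxʲ∧dxᵏ)` of `Λ²` is `√(det h(x)) · h(x)⁻¹` — satisfies
`∂ₓ⋆ = ⋆ ∘ (2S* − tr S)`, where `S*` (matrix `Sᵀ`) is the dual of `S`. -/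
theorem hodge_star_variation
    (h h' S : ℝ → Matrix (Fin 3) (Fin 3) ℝ)
    (hsymm : ∀ x, (h x)ᵀ = h x)
    (hpos : ∀ x, (h x).PosDef)
    (hderiv : ∀ x i j, HasDerivAt (fun t => h t i j) (h' x i j) x)
    (hS : ∀ x, (S x)ᵀ * h x = (-(1 / 2) : ℝ) • h' x) :
    ∀ x i j, HasDerivAt (fun t => (Real.sqrt (h t).det • (h t)⁻¹) i j)
      (((Real.sqrt (h x).det • (h x)⁻¹) *
        ((2 : ℝ) • (S x)ᵀ - (S x).trace • (1 : Matrix (Fin 3) (Fin 3) ℝ))) i j) x := by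
  intro x i j
  have hdet : (0 : ℝ) < (h x).det := (hpos x).det_pos
  have hdet' : (h x).det ≠ 0 := ne_of_gt hdet
  have hu : IsUnit (h x) := (Matrix.isUnit_iff_isUnit_det _).2 (isUnit_iff_ne_zero.2 hdet')
  have hh' : h' x = (-2 : ℝ) • ((S x)ᵀ * h x) := by
    rw [hS x, smul_smul]; norm_num
  -- derivative of the determinant
  have hdetD := det_hasDerivAt h h' x (hderiv x)
  have htr : (adjugate (h x) * h' x).trace = -2 * (S x).trace * (h x).det := by
    rw [hh', Matrix.mul_smul, Matrix.trace_smul, ← Matrix.mul_assoc,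
      Matrix.trace_mul_cycle, Matrix.mul_adjugate,
      Matrix.smul_mul, Matrix.one_mul, Matrix.trace_smul, Matrix.trace_transpose]
    simp [smul_eq_mul]; ring
  rw [htr] at hdetD
  -- derivative of √det
  have hsqne : Real.sqrt (h x).det ≠ 0 := by positivity
  have hsq : HasDerivAt (fun t => Real.sqrt (h t).det)
      (-(S x).trace * Real.sqrt (h x).det) x := by
    have hc := (Real.hasDerivAt_sqrt hdet').comp x hdetD
    simp only [Function.comp_def] at hc
    refine hc.congr_deriv ?_
    symm
    have hss : Real.sqrt (h x).det * Real.sqrt (h x).det = (h x).det :=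
      Real.mul_self_sqrt hdet.le
    field_simp
    linear_combination (-(S x).trace) * hss
  -- derivative of the inverse entries
  have hinv := inv_entry_hasDerivAt h h' x hu (hderiv x) i j
  -- matrix identity for the derivative value
  have hinv2 : (h x)⁻¹ * h' x * (h x)⁻¹ = (-2 : ℝ) • ((h x)⁻¹ * (S x)ᵀ) := by
    rw [hh', Matrix.mul_smul, Matrix.smul_mul]
    congr 1
    rw [Matrix.mul_assoc, Matrix.mul_assoc, Matrix.mul_nonsing_inv _ (isUnit_iff_ne_zero.2 hdet'),
      Matrix.mul_one]
  simp only [Matrix.smul_apply, smul_eq_mul]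
  have H := hsq.fun_mul hinv
  refine H.congr_deriv ?_
  symm
  rw [hinv2]
  simp only [Matrix.mul_apply, Matrix.sub_apply, Matrix.smul_apply, Matrix.neg_apply,
    Matrix.one_apply, Fin.sum_univ_three, smul_eq_mul]
  fin_cases i <;> fin_cases j <;> simp <;> ring
end
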